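/- The only positive integer solution of the equation x⁴ - 2y² = -1 is (x, y) = (1, 1). -/

import Mathlib

set_option maxHeartbeats 1000000 in
/-- Case `b` even of the descent: from a decomposition `a ^ 2 = M ^ 2 + N ^ 2` with
`2 * b' ^ 2 = M * N`, `M` odd positive, `N` positive, coprime, produce a smaller solution. -/
lemma smaller_sol (a M N b' : ℤ) (hM : 0 < M) (hN : 0 < N) (hMo : M % 2 = 1)
    (hg : Int.gcd M N = 1) (ha : a ^ 2 = M ^ 2 + N ^ 2) (hbb : 2 * b' ^ 2 = M * N) :
    ∃ u v i : ℤ, v ≠ 0 ∧ i ≠ 0 ∧ v ^ 4 + i ^ 2 = u ^ 4 ∧ u.natAbs < a.natAbs := by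
  -- N is even
  have hMne : ¬ (2:ℤ) ∣ M := by
    intro h; omega
  have h2N : (2:ℤ) ∣ N := by
    have h2MN : (2:ℤ) ∣ M * N := ⟨b' ^ 2, hbb.symm⟩
    rcases (Int.Prime.dvd_mul' Nat.prime_two h2MN) with h | h
    · exact absurd h hMne
    · exact h
  obtain ⟨N', rfl⟩ := h2N
  have hb'2 : b' ^ 2 = M * N' := by linarith
  have hN' : 0 < N' := by linarith
  have hMN : IsCoprime M N' := by
    have h1 : IsCoprime M (2 * N') := Int.isCoprime_iff_gcd_eq_one.mpr hg
    exact h1.of_isCoprime_of_dvd_right ⟨2, by ring⟩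
  obtain ⟨i, hi⟩ := Int.sq_of_isCoprime hMN hb'2.symm
  have hi' : M = i ^ 2 := by
    rcases hi with h | h
    · exact h
    · exfalso; nlinarith [sq_nonneg i]
  have hi0 : i ≠ 0 := by rintro rfl; simp at hi'; omega
  obtain ⟨j, hj⟩ := Int.sq_of_isCoprime hMN.symm (by linarith [hb'2] : N' * M = b' ^ 2)
  have hj' : N' = j ^ 2 := by
    rcases hj with h | h
    · exact h
    · exfalso; nlinarith [sq_nonneg j]
  -- the pythagorean triple M, N, |a|
  have ha0 : a ≠ 0 := by rintro rfl; nlinarith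
  have hapos : 0 < |a| := abs_pos.mpr ha0
  have ht : PythagoreanTriple M (2 * N') |a| := by
    have : |a| * |a| = a * a := by rw [abs_mul_abs_self]
    unfold PythagoreanTriple
    rw [this]; nlinarith [ha]
  obtain ⟨r, s, ht1, ht2, ht3, ht4, ht5, ht6⟩ := ht.coprime_classification' hg hMo hapos
  -- r * s = N' = j ^ 2
  have hrs : r * s = j ^ 2 := by rw [← hj']; linarith
  have hs0 : s ≠ 0 := by rintro rfl; simp at hrs; nlinarith
  have hr0 : r ≠ 0 := by rintro rfl; simp at hrs; nlinarith
  have hrpos : 0 < r := lt_of_le_of_ne ht6 (Ne.symm hr0)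
  have hspos : 0 < s := by nlinarith
  have hrsc : IsCoprime r s := Int.isCoprime_iff_gcd_eq_one.mpr ht4
  obtain ⟨u, hu⟩ := Int.sq_of_isCoprime hrsc hrs
  have hu' : r = u ^ 2 := by
    rcases hu with h | h
    · exact h
    · exfalso; nlinarith [sq_nonneg u]
  obtain ⟨v, hv⟩ := Int.sq_of_isCoprime hrsc.symm (by linarith [hrs] : s * r = j ^ 2)
  have hv' : s = v ^ 2 := by
    rcases hv with h | h
    · exact h
    · exfalso; nlinarith [sq_nonneg v]
  have hv0 : v ≠ 0 := by rintro rfl; simp at hv'; omega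
  refine ⟨u, v, i, hv0, hi0, ?_, ?_⟩
  · -- v ^ 4 + i ^ 2 = u ^ 4
    have : i ^ 2 = r ^ 2 - s ^ 2 := by rw [← hi', ht1]
    rw [hu', hv'] at this
    linarith [this]
  · -- u.natAbs < a.natAbs
    rw [Int.natAbs_lt_iff_sq_lt, ← hu']
    have h1 : 1 ≤ r := hrpos
    have h2 : 1 ≤ s := hspos
    have haa : a ^ 2 = (r ^ 2 + s ^ 2) ^ 2 := by
      rw [← sq_abs a, ht3]
    have hr2 : r ≤ r ^ 2 := le_self_pow₀ h1 two_ne_zero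
    have hs2 : (1:ℤ) ≤ s ^ 2 := by nlinarith [h2]
    have key : r < r ^ 2 + s ^ 2 := by linarith
    have key2 : r ^ 2 + s ^ 2 ≤ (r ^ 2 + s ^ 2) ^ 2 := le_self_pow₀ (by linarith) two_ne_zero
    rw [haa]; exact lt_of_lt_of_le key key2

set_option maxHeartbeats 1600000 in
/-- The equation `b ^ 4 + c ^ 2 = a ^ 4` has no solutions with `b ≠ 0` and `c ≠ 0`. -/
lemma no_fermat_descent : ∀ n : ℕ, ∀ a b c : ℤ, a.natAbs = n → b ≠ 0 → c ≠ 0 →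
    b ^ 4 + c ^ 2 ≠ a ^ 4 := by
  intro n
  induction n using Nat.strong_induction_on with
  | _ n ih =>
  intro a b c hn hb hc heq
  have hb4 : 0 < b ^ 4 := by positivity
  have hc2 : 0 < c ^ 2 := by positivity
  have ha : a ≠ 0 := by rintro rfl; simp at heq; nlinarith
  by_cases hg : Int.gcd a b = 1
  · -- coprime case
    have hab : IsCoprime a b := Int.isCoprime_iff_gcd_eq_one.mpr hg
    -- a is odd
    have sqmod4 : ∀ t : ℤ, t ^ 2 % 4 = 0 ∨ t ^ 2 % 4 = 1 := by
      intro t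
      rcases Int.even_or_odd t with ⟨k, rfl⟩ | ⟨k, rfl⟩
      · left
        have h1 : (k + k) ^ 2 = 4 * k ^ 2 := by ring
        rw [h1]; exact Int.mul_emod_right 4 _
      · right
        have h1 : (2 * k + 1) ^ 2 = 4 * (k ^ 2 + k) + 1 := by ring
        omega
    have haodd : a % 2 = 1 := by
      rcases Int.emod_two_eq_zero_or_one a with h | h
      · exfalso
        have hbodd : b % 2 = 1 := by
          rcases Int.emod_two_eq_zero_or_one b with h' | h'
          · exfalso
            have h2 : (2:ℤ) ∣ Int.gcd a b :=
              Int.dvd_coe_gcd (Int.dvd_of_emod_eq_zero h) (Int.dvd_of_emod_eq_zero h')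
            rw [hg] at h2; norm_num at h2
          · exact h'
        obtain ⟨a', rfl⟩ := Int.dvd_of_emod_eq_zero h
        obtain ⟨b', hb'⟩ : ∃ b', b = 2 * b' + 1 := ⟨b / 2, by omega⟩
        have hkey : c ^ 2 = 4 * (4 * a' ^ 4 - 4 * b' ^ 4 - 8 * b' ^ 3 - 6 * b' ^ 2 - 2 * b' - 1) + 3 := by
          rw [hb'] at heq; linear_combination heq
        have := sqmod4 c
        omega
      · exact h
    -- b and c are coprime
    have hbc : IsCoprime b c := by
      have h1 : IsCoprime b (a ^ 4) := hab.symm.pow_right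
      have h2 : IsCoprime b (c ^ 2) := by
        have h3 : c ^ 2 = a ^ 4 + b * (-(b ^ 3)) := by linear_combination heq
        rw [h3]; exact h1.add_mul_left_right (-(b ^ 3))
      exact h2.of_isCoprime_of_dvd_right (dvd_pow_self c two_ne_zero)
    have ha2pos : 0 < a ^ 2 := by positivity
    rcases Int.emod_two_eq_zero_or_one b with hbe | hbo
    · -- b even, c odd
      have hcodd : c % 2 = 1 := by
        rcases Int.emod_two_eq_zero_or_one c with h | h
        · exfalso
          obtain ⟨a', ha'⟩ : ∃ a', a = 2 * a' + 1 := ⟨a / 2, by omega⟩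
          obtain ⟨b', rfl⟩ := Int.dvd_of_emod_eq_zero hbe
          obtain ⟨c', rfl⟩ := Int.dvd_of_emod_eq_zero h
          rw [ha'] at heq
          have : (2:ℤ) ∣ 1 := ⟨8 * b' ^ 4 + 2 * c' ^ 2 - 8 * a' ^ 4 - 16 * a' ^ 3 - 12 * a' ^ 2 - 4 * a',
            by linear_combination -heq⟩
          norm_num at this
        · exact h
      have ht : PythagoreanTriple c (b ^ 2) (a ^ 2) := by
        unfold PythagoreanTriple; linear_combination heq
      have hgcb : Int.gcd c (b ^ 2) = 1 := Int.isCoprime_iff_gcd_eq_one.mp hbc.symm.pow_right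
      obtain ⟨m, nn, ht1, ht2, ht3, ht4, ht5, ht6⟩ := ht.coprime_classification' hgcb hcodd ha2pos
      have hm0 : m ≠ 0 := by
        rintro rfl; simp at ht2
        exact hb ht2
      have hmpos : 0 < m := lt_of_le_of_ne ht6 (Ne.symm hm0)
      have hb2pos : 0 < b ^ 2 := by positivity
      have hnpos : 0 < nn := by nlinarith
      obtain ⟨b', rfl⟩ := Int.dvd_of_emod_eq_zero hbe
      have h2b : 2 * b' ^ 2 = m * nn :=
        mul_left_cancel₀ two_ne_zero (by linear_combination ht2)
      rcases ht5 with ⟨hme, hno⟩ | ⟨hmo, hne⟩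
      · -- m even, nn odd : use N := m, M := nn
        obtain ⟨u, v, i, hv0, hi0, heq', hlt⟩ :=
          smaller_sol a nn m b' hnpos hmpos hno (by rwa [Int.gcd_comm])
            (by linarith) (by linarith)
        exact ih _ (by omega) u v i rfl hv0 hi0 heq'
      · -- m odd, nn even
        obtain ⟨u, v, i, hv0, hi0, heq', hlt⟩ :=
          smaller_sol a m nn b' hmpos hnpos hmo ht4 ht3 h2b
        exact ih _ (by omega) u v i rfl hv0 hi0 heq'
    · -- b odd
      have hb2odd : b ^ 2 % 2 = 1 := by
        obtain ⟨b', hb'⟩ : ∃ b', b = 2 * b' + 1 := ⟨b / 2, by omega⟩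
        have : b ^ 2 = 2 * (2 * b' ^ 2 + 2 * b') + 1 := by rw [hb']; ring
        omega
      have ht : PythagoreanTriple (b ^ 2) c (a ^ 2) := by
        unfold PythagoreanTriple; linear_combination heq
      have hgbc : Int.gcd (b ^ 2) c = 1 := Int.isCoprime_iff_gcd_eq_one.mp hbc.pow_left
      obtain ⟨m, nn, ht1, ht2, ht3, ht4, ht5, ht6⟩ := ht.coprime_classification' hgbc hb2odd ha2pos
      have hn0 : nn ≠ 0 := by
        rintro rfl; simp at ht2; exact hc ht2
      have hab0 : a * b ≠ 0 := mul_ne_zero ha hb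
      have heq' : nn ^ 4 + (a * b) ^ 2 = m ^ 4 := by
        linear_combination a ^ 2 * ht1 + (m ^ 2 - nn ^ 2) * ht3
      have hmlt : m.natAbs < n := by
        rw [← hn, Int.natAbs_lt_iff_sq_lt]
        have : 0 < nn ^ 2 := by positivity
        nlinarith [ht3]
      exact ih _ hmlt m nn (a * b) rfl hn0 hab0 heq'
  · -- non-coprime: divide out a common prime
    obtain ⟨p, hp, hpa, hpb⟩ := Nat.Prime.not_coprime_iff_dvd.mp hg
    obtain ⟨a1, rfl⟩ := Int.natCast_dvd.mpr hpa
    obtain ⟨b1, rfl⟩ := Int.natCast_dvd.mpr hpb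
    have hp0 : (p:ℤ) ≠ 0 := Int.natCast_ne_zero.mpr hp.ne_zero
    have hpc : ((p:ℤ) ^ 2) ^ 2 ∣ c ^ 2 := by
      have hc2' : c ^ 2 = ((p:ℤ) ^ 2) ^ 2 * (a1 ^ 4 - b1 ^ 4) := by linear_combination heq
      exact ⟨a1 ^ 4 - b1 ^ 4, hc2'⟩
    have hpc' : (p:ℤ) ^ 2 ∣ c := (Int.pow_dvd_pow_iff two_ne_zero).mp hpc
    obtain ⟨c1, rfl⟩ := hpc'
    have hb1 : b1 ≠ 0 := right_ne_zero_of_mul hb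
    have hc1 : c1 ≠ 0 := right_ne_zero_of_mul hc
    have hlt : a1.natAbs < n := by
      rw [← hn, Int.natAbs_mul]
      have h1 : a1.natAbs ≠ 0 := Int.natAbs_ne_zero.mpr (right_ne_zero_of_mul ha)
      have hp2 : 1 < (p:ℤ).natAbs := by simpa using hp.one_lt
      calc a1.natAbs = 1 * a1.natAbs := (one_mul _).symm
        _ < (p:ℤ).natAbs * a1.natAbs :=
          Nat.mul_lt_mul_of_lt_of_le hp2 (le_refl _) (Nat.pos_of_ne_zero h1)
    refine ih _ hlt a1 b1 c1 rfl hb1 hc1 ?_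
    exact mul_left_cancel₀ (pow_ne_zero 4 hp0) (by linear_combination heq)

theorem stmt_7 (x y : ℤ) (hx : 0 < x) (hy : 0 < y) :
    x ^ 4 - 2 * y ^ 2 = -1 ↔ x = 1 ∧ y = 1 := by
  constructor
  · intro h
    have h0 : y ^ 2 - 1 = 0 := by
      by_contra hz0
      exact no_fermat_descent y.natAbs y x (y ^ 2 - 1) rfl (ne_of_gt hx) hz0
        (by linear_combination h)
    have hy1 : y = 1 := by nlinarith
    have hx1 : x = 1 := by nlinarith [sq_nonneg (x - 1), sq_nonneg (x + 1), sq_nonneg x]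
    exact ⟨hx1, hy1⟩
  · rintro ⟨rfl, rfl⟩; norm_num
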